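/- Let G be a finite simple graph on n vertices having at least one edge, with Laplacian matrix L(G) and maximum vertex degree d_max, let D be a real number with 0 ≤ D and D² < 4·d_max, and let 𝒜 be the 2n×2n real block matrix with blocks (-D·Iₙ, Iₙ; -L(G), 0). Then 𝒜 has at least one complex eigenvalue with nonzero imaginary part. -/

import Mathlib

open Matrix

/-- Rayleigh-type bound: for a real symmetric matrix and a unit vector `x`,
some eigenvalue is at least `x ⬝ᵥ (A *ᵥ x)`. -/
lemma rayleigh_aux {n : ℕ} [Nonempty (Fin n)] (A : Matrix (Fin n) (Fin n) ℝ)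
    (hA : A.IsHermitian) (x : Fin n → ℝ) (hx : x ⬝ᵥ x = 1) :
    ∃ i, x ⬝ᵥ (A *ᵥ x) ≤ hA.eigenvalues i := by
  obtain ⟨i0, -, hi0⟩ := Finset.exists_max_image Finset.univ hA.eigenvalues
    ⟨Classical.arbitrary _, Finset.mem_univ _⟩
  refine ⟨i0, ?_⟩
  set U : Matrix (Fin n) (Fin n) ℝ := (hA.eigenvectorUnitary : Matrix (Fin n) (Fin n) ℝ) with hU
  set y : Fin n → ℝ := star U *ᵥ x with hy
  have hstar : star U = Uᵀ := by
    rw [Matrix.star_eq_conjTranspose, Matrix.conjTranspose_eq_transpose_of_trivial]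
  have hxU : x ᵥ* U = y := by
    rw [hy, hstar, Matrix.mulVec_transpose]
  have hUU : U * star U = 1 := (Matrix.mem_unitaryGroup_iff).mp (hA.eigenvectorUnitary).2
  have hyy : y ⬝ᵥ y = 1 := by
    calc y ⬝ᵥ y = (x ᵥ* U) ⬝ᵥ (star U *ᵥ x) := by rw [hxU]
    _ = x ⬝ᵥ (U *ᵥ (star U *ᵥ x)) := (Matrix.dotProduct_mulVec x U _).symm
    _ = x ⬝ᵥ ((U * star U) *ᵥ x) := by rw [Matrix.mulVec_mulVec]
    _ = 1 := by rw [hUU, Matrix.one_mulVec, hx]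
  have hq : x ⬝ᵥ (A *ᵥ x) = ∑ i, hA.eigenvalues i * (y i)^2 := by
    conv_lhs => rw [hA.spectral_theorem, Unitary.conjStarAlgAut_apply]
    rw [← hU, ← Matrix.mulVec_mulVec, ← Matrix.mulVec_mulVec,
      Matrix.dotProduct_mulVec, hxU, ← hy]
    simp only [dotProduct, Matrix.mulVec_diagonal, Function.comp_apply,
      RCLike.ofReal_real_eq_id, id_eq]
    exact Finset.sum_congr rfl fun i _ => by ring
  have hyy' : ∑ i, (y i)^2 = 1 := by
    rw [← hyy]
    exact Finset.sum_congr rfl fun i _ => by rw [sq]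
  rw [hq]
  calc ∑ i, hA.eigenvalues i * (y i)^2 ≤ ∑ i, hA.eigenvalues i0 * (y i)^2 :=
        Finset.sum_le_sum fun i _ =>
          mul_le_mul_of_nonneg_right (hi0 i (Finset.mem_univ i)) (sq_nonneg _)
    _ = hA.eigenvalues i0 := by rw [← Finset.mul_sum, hyy', mul_one]

theorem stmt_11 {n : ℕ} (G : SimpleGraph (Fin n)) [DecidableRel G.Adj]
    (hE : G.edgeSet.Nonempty)
    (D : ℝ) (hD0 : 0 ≤ D) (hD : D ^ 2 < 4 * G.maxDegree) :
    let 𝒜 : Matrix (Fin n ⊕ Fin n) (Fin n ⊕ Fin n) ℝ :=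
      Matrix.fromBlocks ((-D) • 1) 1 (-(G.lapMatrix ℝ)) 0
    ∃ lam : ℂ, lam ∈ spectrum ℂ (𝒜.map Complex.ofReal) ∧ lam.im ≠ 0 := by
  intro 𝒜
  obtain ⟨e, he⟩ := hE
  haveI : Nonempty (Fin n) := ⟨e.out.1⟩
  -- the Laplacian and its top eigenvalue
  set L : Matrix (Fin n) (Fin n) ℝ := G.lapMatrix ℝ with hL
  have hA : L.IsHermitian := (G.posSemidef_lapMatrix ℝ).1
  obtain ⟨v, hv⟩ := G.exists_maximal_degree_vertex
  set x : Fin n → ℝ := Pi.single v 1 with hxdef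
  have hx : x ⬝ᵥ x = 1 := by
    simp [hxdef, dotProduct, Pi.single_apply]
  have hqv : x ⬝ᵥ (L *ᵥ x) = G.degree v := by
    have h1 : (L *ᵥ x) v = L v v := by
      simp [Matrix.mulVec, dotProduct, hxdef, Pi.single_apply]
    have h2 : x ⬝ᵥ (L *ᵥ x) = (L *ᵥ x) v := by
      simp [hxdef, dotProduct, Pi.single_apply]
    rw [h2, h1, hL]
    simp [SimpleGraph.lapMatrix, SimpleGraph.degMatrix]
  obtain ⟨i0, hi0⟩ := rayleigh_aux L hA x hx
  set μ : ℝ := hA.eigenvalues i0 with hμdef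
  have hμ : (G.maxDegree : ℝ) ≤ μ := by
    rw [hv]; rw [hqv] at hi0; exact hi0
  set u : Fin n → ℝ := ⇑(hA.eigenvectorBasis i0) with hudef
  have hu : L *ᵥ u = μ • u := hA.mulVec_eigenvectorBasis i0
  have hu0 : u ≠ 0 := by
    have hne := hA.eigenvectorBasis.orthonormal.ne_zero i0
    intro h
    apply hne
    ext j
    exact congrFun h j
  -- the complex eigenvalue
  have hpos : 0 < 4 * μ - D ^ 2 := by
    have hD' : (D:ℝ)^2 < 4 * (G.maxDegree : ℝ) := hD
    linarith
  set s : ℝ := Real.sqrt (4 * μ - D ^ 2) with hsdef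
  have hs : 0 < s := Real.sqrt_pos.mpr hpos
  have hs2 : s ^ 2 = 4 * μ - D ^ 2 := Real.sq_sqrt hpos.le
  set lam : ℂ := ⟨-D/2, s/2⟩ with hlamdef
  have him : lam.im ≠ 0 := by
    simp only [hlamdef]
    positivity
  have hkey : lam * (lam + (D:ℂ)) = -(μ:ℂ) := by
    apply Complex.ext <;>
      simp only [hlamdef, Complex.mul_re, Complex.mul_im, Complex.add_re, Complex.add_im,
        Complex.ofReal_re, Complex.ofReal_im, Complex.neg_re, Complex.neg_im] <;>
      nlinarith [hs2]
  -- the eigenvector of 𝒜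
  set w1 : Fin n → ℂ := fun i => (u i : ℂ) with hw1
  set w2 : Fin n → ℂ := fun i => (lam + (D:ℂ)) * (u i : ℂ) with hw2
  set w : (Fin n ⊕ Fin n) → ℂ := Sum.elim w1 w2 with hw
  have hw0 : w ≠ 0 := by
    intro h
    apply hu0
    ext j
    have := congrFun h (Sum.inl j)
    simpa [hw, hw1, Complex.ofReal_eq_zero] using this
  -- block structure of the complexified matrix
  have e11 : (((-D) • 1 : Matrix (Fin n) (Fin n) ℝ)).map Complex.ofReal
      = (-(D:ℂ)) • 1 := by
    ext i j
    by_cases h : i = j <;>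
      simp [Matrix.map_apply, Matrix.one_apply, h]
  have e12 : ((1 : Matrix (Fin n) (Fin n) ℝ)).map Complex.ofReal = 1 := by
    ext i j
    simp [Matrix.map_apply, Matrix.one_apply, apply_ite Complex.ofReal]
  have e21 : (-L).map Complex.ofReal = -(L.map Complex.ofReal) := by
    ext i j
    simp [Matrix.map_apply]
  have e22 : ((0 : Matrix (Fin n) (Fin n) ℝ)).map Complex.ofReal = 0 := by
    ext i j
    simp [Matrix.map_apply]
  have hblocks : 𝒜.map Complex.ofReal
      = Matrix.fromBlocks ((-(D:ℂ)) • 1) 1 (-(L.map Complex.ofReal)) 0 := by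
    show (Matrix.fromBlocks ((-D) • 1) 1 (-L) 0).map Complex.ofReal = _
    rw [Matrix.fromBlocks_map, e11, e12, e21, e22]
  have hLw1 : (L.map Complex.ofReal) *ᵥ w1 = fun i => ((μ:ℂ) * (u i : ℂ)) := by
    funext i
    have hmv := RingHom.map_mulVec Complex.ofRealHom L u i
    rw [hu] at hmv
    have hco : ⇑Complex.ofRealHom = Complex.ofReal := rfl
    rw [hco] at hmv
    have : w1 = Complex.ofReal ∘ u := by funext j; simp [hw1]
    rw [this, ← hmv]
    simp
  have hMw : (𝒜.map Complex.ofReal) *ᵥ w = lam • w := by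
    rw [hblocks, hw, Matrix.fromBlocks_mulVec]
    rw [show (Sum.elim w1 w2) ∘ Sum.inl = w1 from rfl,
        show (Sum.elim w1 w2) ∘ Sum.inr = w2 from rfl]
    funext z
    cases z with
    | inl i =>
      simp only [Sum.elim_inl, Pi.add_apply, Matrix.smul_mulVec, Matrix.one_mulVec,
        Pi.smul_apply, smul_eq_mul, hw1, hw2]
      ring
    | inr i =>
      simp only [Sum.elim_inr, Pi.add_apply, Matrix.zero_mulVec, add_zero,
        Matrix.neg_mulVec, hLw1, Pi.neg_apply, Pi.smul_apply, smul_eq_mul, hw2]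
      rw [show lam * ((lam + (D:ℂ)) * (u i : ℂ)) = (lam * (lam + (D:ℂ))) * (u i : ℂ) by ring,
        hkey]
      ring
  refine ⟨lam, spectrum.mem_iff.mpr ?_, him⟩
  intro hUnit
  have h0 : (algebraMap ℂ (Matrix (Fin n ⊕ Fin n) (Fin n ⊕ Fin n) ℂ) lam
      - 𝒜.map Complex.ofReal) *ᵥ w = 0 := by
    rw [Matrix.sub_mulVec, Algebra.algebraMap_eq_smul_one, Matrix.smul_mulVec,
      Matrix.one_mulVec, hMw, sub_self]
  have hinv : (↑hUnit.unit⁻¹ : Matrix (Fin n ⊕ Fin n) (Fin n ⊕ Fin n) ℂ)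
      * (algebraMap ℂ (Matrix (Fin n ⊕ Fin n) (Fin n ⊕ Fin n) ℂ) lam
        - 𝒜.map Complex.ofReal) = 1 := by
    have hinv' := hUnit.unit.inv_mul
    rw [hUnit.unit_spec] at hinv'
    exact hinv'
  apply hw0
  calc w = ((↑hUnit.unit⁻¹ : Matrix (Fin n ⊕ Fin n) (Fin n ⊕ Fin n) ℂ)
        * (algebraMap ℂ (Matrix (Fin n ⊕ Fin n) (Fin n ⊕ Fin n) ℂ) lam
          - 𝒜.map Complex.ofReal)) *ᵥ w := by rw [hinv, Matrix.one_mulVec]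
    _ = (↑hUnit.unit⁻¹ : Matrix (Fin n ⊕ Fin n) (Fin n ⊕ Fin n) ℂ)
        *ᵥ ((algebraMap ℂ (Matrix (Fin n ⊕ Fin n) (Fin n ⊕ Fin n) ℂ) lam
          - 𝒜.map Complex.ofReal) *ᵥ w) := by rw [← Matrix.mulVec_mulVec]
    _ = 0 := by rw [h0, Matrix.mulVec_zero]
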